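/- For any normed BPA system G = (V, Act, R) and γ, δ ∈ V* with R_γ = R_δ: for all α, β ∈ V*, αγ ~ βγ if and only if αδ ~ βδ; in particular R_{Aγ} = R_{Aδ} for every A ∈ V. -/

import Mathlib

/-! Common definitions: labelled transition systems, branching bisimulation,
branching bisimilarity, silent states, class-change norm, BPA systems,
right-to-left finite transducers. -/

/-- A τ-path `t = t₀ →τ t₁ →τ ⋯ →τ t_k` in which every state after `t₀`
is related to `s` by `B`. -/
inductive TauSeq {S Act : Type} (tr : S → Act → S → Prop) (τ : Act)
    (B : S → S → Prop) (s : S) : S → S → Prop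
  | refl (t : S) : TauSeq tr τ B s t t
  | step {t t' t'' : S} : tr t τ t' → B s t' → TauSeq tr τ B s t' t'' →
      TauSeq tr τ B s t t''

/-- `B` is a branching bisimulation in the LTS given by `tr` with silent action `τ`. -/
def IsBranchingBisim {S Act : Type} (tr : S → Act → S → Prop) (τ : Act)
    (B : S → S → Prop) : Prop :=
  ∀ s t, B s t →
    (∀ a s', tr s a s' →
      ((a = τ ∧ B s' t) ∨
        ∃ tk t', TauSeq tr τ B s t tk ∧ tr tk a t' ∧ B s' t')) ∧
    (∀ a t', tr t a t' →
      ((a = τ ∧ B s t') ∨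
        ∃ sk s', TauSeq tr τ (fun u v => B v u) t s sk ∧ tr sk a s' ∧ B s' t'))

/-- Branching bisimilarity: `s ~ t` iff some branching bisimulation contains `(s,t)`. -/
def BBisim {S Act : Type} (tr : S → Act → S → Prop) (τ : Act) (s t : S) : Prop :=
  ∃ B, IsBranchingBisim tr τ B ∧ B s t

/-- `Steps tr s w t`: there is a path from `s` to `t` labelled by the word `w`. -/
inductive Steps {S Act : Type} (tr : S → Act → S → Prop) : S → List Act → S → Prop
  | refl (s : S) : Steps tr s [] s
  | step {s : S} {a : Act} {s' : S} {w : List Act} {t : S} :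
      tr s a s' → Steps tr s' w t → Steps tr s (a :: w) t

/-- A state is silent if only τ-labelled words can be performed from it. -/
def SilentState {S Act : Type} (tr : S → Act → S → Prop) (τ : Act) (s : S) : Prop :=
  ∀ w s', Steps tr s w s' → ∀ a ∈ w, a = τ

/-- A τ-path in which no transition is class-changing (each step stays in the same
`~`-class). -/
inductive TauNC {S Act : Type} (tr : S → Act → S → Prop) (τ : Act) : S → S → Prop
  | refl (t : S) : TauNC tr τ t t
  | step {t t' t'' : S} : tr t τ t' → BBisim tr τ t t' → TauNC tr τ t' t'' →
      TauNC tr τ t t''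

/-- `CCPath tr τ s n t`: there is a path from `s` to `t` containing exactly `n`
class-changing transitions. -/
inductive CCPath {S Act : Type} (tr : S → Act → S → Prop) (τ : Act) : S → ℕ → S → Prop
  | refl (s : S) : CCPath tr τ s 0 s
  | stepEq {s : S} {a : Act} {s' : S} {n : ℕ} {t : S} :
      tr s a s' → BBisim tr τ s s' → CCPath tr τ s' n t → CCPath tr τ s n t
  | stepNe {s : S} {a : Act} {s' : S} {n : ℕ} {t : S} :
      tr s a s' → ¬ BBisim tr τ s s' → CCPath tr τ s' n t → CCPath tr τ s (n + 1) t

/-- The class-change norm: the least number of class-changing transitions on a path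
to a silent state; `⊤` (ω) if no silent state is reachable. -/
noncomputable def ccNorm {S Act : Type} (tr : S → Act → S → Prop) (τ : Act) (s : S) : ℕ∞ :=
  sInf {n : ℕ∞ | ∃ ℓ : ℕ, n = (ℓ : ℕ∞) ∧ ∃ t, CCPath tr τ s ℓ t ∧ SilentState tr τ t}

/-- A BPA system: a finite set of rules `A →a α` (a context-free grammar in
Greibach normal form, no starting variable). -/
structure BPA (V Act : Type) where
  rules : Finset (V × Act × List V)

/-- The transition relation of the LTS `L_G` associated with a BPA system `G`:
`Aβ →a γβ` whenever `A →a γ` is a rule. -/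
def BPA.tr {V Act : Type} (G : BPA V Act) : List V → Act → List V → Prop :=
  fun s a t => ∃ (A : V) (γ β : List V), (A, a, γ) ∈ G.rules ∧ s = A :: β ∧ t = γ ++ β

/-- The (standard, syntactic) norm of a process: the length of a shortest word
leading to the empty process; `⊤` (ω) if there is none. -/
noncomputable def BPA.norm {V Act : Type} (G : BPA V Act) (α : List V) : ℕ∞ :=
  sInf {n : ℕ∞ | ∃ w : List Act, n = (w.length : ℕ∞) ∧ Steps G.tr α w []}

/-- A BPA system is normed if every variable has a finite norm. -/
def BPA.Normed {V Act : Type} (G : BPA V Act) : Prop :=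
  ∀ A : V, G.norm [A] ≠ ⊤

/-- The transition relation of `L_{G,R}`: as `L_G`, but all outgoing transitions of
states in `R*` are removed. -/
def BPA.trR {V Act : Type} (G : BPA V Act) (R : Set V) : List V → Act → List V → Prop :=
  fun s a t => G.tr s a t ∧ ¬ (∀ X ∈ s, X ∈ R)

/-- `R_γ`: the set of variables redundant w.r.t. `γ`, i.e. those `X` with `Xγ ~ γ`. -/
def RedSet {V Act : Type} (G : BPA V Act) (τ : Act) (γ : List V) : Set V :=
  {X : V | BBisim G.tr τ (X :: γ) γ}

/-- `α` is a redundancy-free prefix of `αγ`: it cannot be written as `δXβ` with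
`Xβγ ~ βγ`. -/
def RedFreePrefix {V Act : Type} (G : BPA V Act) (τ : Act) (α γ : List V) : Prop :=
  ¬ ∃ (δ : List V) (X : V) (β : List V),
      α = δ ++ X :: β ∧ BBisim G.tr τ (X :: (β ++ γ)) (β ++ γ)

/-- A finite-state transducer reading (and writing) from right to left. -/
structure Transducer (Q V : Type) where
  delta : Q → V → Q × List V
  q0 : Q

/-- Running the transducer on an input string, right to left:
`T.run α q = (q', β)` means `q' ⇐α|β= q`. -/
def Transducer.run {Q V : Type} (T : Transducer Q V) : List V → Q → Q × List V
  | [], q => (q, [])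
  | A :: α, q =>
      let p := T.run α q
      ((T.delta p.1 A).1, (T.delta p.1 A).2 ++ p.2)

/-- `T_q(α)`: the output of `T` on input `α`, started in state `q`. -/
def Transducer.out {Q V : Type} (T : Transducer Q V) (q : Q) (α : List V) : List V :=
  (T.run α q).2

/-- `q`-normal forms: `ε ∈ NF_q`, and `αA ∈ NF_q` iff `A` is a `q`-prime and
`α` is a `q'`-normal form where `q' ⇐A|A= q`. -/
inductive Transducer.NF {Q V : Type} (T : Transducer Q V) : Q → List V → Prop
  | nil (q : Q) : Transducer.NF T q []
  | snoc {q : Q} {A : V} {α : List V} :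
      (T.delta q A).2 = [A] → Transducer.NF T (T.delta q A).1 α →
      Transducer.NF T q (α ++ [A])

/-- A normal-form-computing (nfc) transducer: each `T_q(A)` is a `q`-normal form,
and `q' ⇐A|γ= q` implies `q' ⇐γ|γ= q`. -/
def Transducer.IsNFC {Q V : Type} (T : Transducer Q V) : Prop :=
  ∀ (q : Q) (A : V),
    Transducer.NF T q (T.delta q A).2 ∧ T.run (T.delta q A).2 q = T.delta q A

/-- A τ-path in `L_G` along which the `T_q`-output stays constant. -/
inductive ConstTauSeq {Q V Act : Type} (tr : List V → Act → List V → Prop) (τ : Act)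
    (T : Transducer Q V) (q : Q) : List V → List V → Prop
  | refl (α : List V) : ConstTauSeq tr τ T q α α
  | step {α α' α'' : List V} : tr α τ α' → T.out q α' = T.out q α →
      ConstTauSeq tr τ T q α' α'' → ConstTauSeq tr τ T q α α''

/-- The long move `α ⇒a_q β`. -/
def BigStep {Q V Act : Type} (G : BPA V Act) (τ : Act) (T : Transducer Q V) (q : Q)
    (α : List V) (a : Act) (β : List V) : Prop :=
  (a = τ ∧ β = T.out q α) ∨
  ∃ αk β', ConstTauSeq G.tr τ T q α αk ∧ G.tr αk a β' ∧ β = T.out q β'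

/-- The equivalence `α₁ ≈_q α₂`: the same long moves are available. -/
def TApprox {Q V Act : Type} (G : BPA V Act) (τ : Act) (T : Transducer Q V) (q : Q)
    (α₁ α₂ : List V) : Prop :=
  ∀ a β, BigStep G τ T q α₁ a β ↔ BigStep G τ T q α₂ a β

/-- Consistency of an nfc-transducer with a BPA system (Definition 4.1). -/
def ConsistentWith {Q V Act : Type} (T : Transducer Q V) (G : BPA V Act) (τ : Act) : Prop :=
  (∀ A : V, T.out T.q0 [A] = [] → TApprox G τ T T.q0 [A] []) ∧
  (∀ (q : Q) (A : V), T.out q [A] ≠ [] → TApprox G τ T q [A] (T.out q [A])) ∧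
  (∀ (q : Q) (A C : V), T.out q [A, C] = [C] → T.out q [C] = [C] →
    TApprox G τ T q [A, C] [C])

section Generic

variable {S Act : Type} {tr : S → Act → S → Prop} {τ : Act}

theorem TauSeq.mono' {B B' : S → S → Prop} {s s' t u : S}
    (h : TauSeq tr τ B s t u) (f : ∀ v, B s v → B' s' v) :
    TauSeq tr τ B' s' t u := by
  induction h with
  | refl t => exact .refl t
  | step h1 h2 _ ih => exact .step h1 (f _ h2) ih

theorem TauSeq.mono {B B' : S → S → Prop} {s t u : S}
    (h : TauSeq tr τ B s t u) (f : ∀ v, B s v → B' s v) :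
    TauSeq tr τ B' s t u := by
  induction h with
  | refl t => exact .refl t
  | step h1 h2 _ ih => exact .step h1 (f _ h2) ih

theorem TauSeq.concat {B : S → S → Prop} {s t u v : S}
    (h : TauSeq tr τ B s t u) (h' : TauSeq tr τ B s u v) :
    TauSeq tr τ B s t v := by
  induction h with
  | refl t => exact h'
  | step h1 h2 _ ih => exact .step h1 h2 (ih h')

theorem TauSeq.snoc {B : S → S → Prop} {s t u v : S}
    (h : TauSeq tr τ B s t u) (h1 : tr u τ v) (h2 : B s v) :
    TauSeq tr τ B s t v :=
  h.concat (.step h1 h2 (.refl v))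

theorem TauSeq.endRel {B : S → S → Prop} {s t u : S}
    (h : TauSeq tr τ B s t u) (h0 : B s t) : B s u := by
  induction h with
  | refl t => exact h0
  | step h1 h2 _ ih => exact ih h2

/-- Either a `TauSeq` is trivial, or it has a last step. -/
theorem TauSeq.lastStep {B : S → S → Prop} {s t u : S}
    (h : TauSeq tr τ B s t u) :
    t = u ∨ ∃ p, TauSeq tr τ B s t p ∧ tr p τ u ∧ B s u := by
  induction h with
  | refl t => exact Or.inl rfl
  | step h1 h2 h3 ih =>
    rcases ih with rfl | ⟨p, hp, hpu, hu⟩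
    · exact Or.inr ⟨_, .refl _, h1, h2⟩
    · exact Or.inr ⟨p, .step h1 h2 hp, hpu, hu⟩

theorem bbisim_refl (s : S) : BBisim tr τ s s := by
  refine ⟨fun x y => x = y, ?_, rfl⟩
  intro s t hst; subst hst
  constructor
  · intro a s' h; exact Or.inr ⟨s, s', .refl s, h, rfl⟩
  · intro a t' h; exact Or.inr ⟨s, t', .refl s, h, rfl⟩

theorem IsBranchingBisim.flip {B : S → S → Prop}
    (h : IsBranchingBisim tr τ B) :
    IsBranchingBisim tr τ (fun u v => B v u) := by
  intro s t hst
  obtain ⟨c1, c2⟩ := h t s hst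
  constructor
  · intro a s' hm
    rcases c2 a s' hm with ⟨ha, hb⟩ | ⟨tk, t', h1, h2, h3⟩
    · exact Or.inl ⟨ha, hb⟩
    · exact Or.inr ⟨tk, t', h1, h2, h3⟩
  · intro a t' hm
    rcases c1 a t' hm with ⟨ha, hb⟩ | ⟨tk, t'', h1, h2, h3⟩
    · exact Or.inl ⟨ha, hb⟩
    · exact Or.inr ⟨tk, t'', h1, h2, h3⟩

theorem BBisim.symm {s t : S} (h : BBisim tr τ s t) : BBisim tr τ t s := by
  obtain ⟨B, hB, hst⟩ := h
  exact ⟨fun u v => B v u, hB.flip, hst⟩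

/-- A symmetric relation satisfying the first clause is a branching bisimulation. -/
theorem isBB_of_symm {B : S → S → Prop}
    (hsymm : ∀ s t, B s t → B t s)
    (h1 : ∀ s t, B s t → ∀ a s', tr s a s' →
      ((a = τ ∧ B s' t) ∨
        ∃ tk t', TauSeq tr τ B s t tk ∧ tr tk a t' ∧ B s' t')) :
    IsBranchingBisim tr τ B := by
  intro s t hst
  refine ⟨h1 s t hst, ?_⟩
  intro a t' hm
  rcases h1 t s (hsymm _ _ hst) a t' hm with ⟨ha, hb⟩ | ⟨sk, s', hseq, hmv, hrel⟩
  · exact Or.inl ⟨ha, hsymm _ _ hb⟩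
  · exact Or.inr ⟨sk, s', hseq.mono (fun v hv => hsymm _ _ hv), hmv, hsymm _ _ hrel⟩

/-- Branching bisimilarity is itself a branching bisimulation. -/
theorem bbisim_isBB : IsBranchingBisim tr τ (BBisim tr τ) := by
  intro s t hst
  obtain ⟨B, hB, hst'⟩ := hst
  obtain ⟨c1, c2⟩ := hB s t hst'
  constructor
  · intro a s' hm
    rcases c1 a s' hm with ⟨ha, hb⟩ | ⟨tk, t', h1, h2, h3⟩
    · exact Or.inl ⟨ha, ⟨B, hB, hb⟩⟩
    · exact Or.inr ⟨tk, t', h1.mono (fun v hv => ⟨B, hB, hv⟩), h2, ⟨B, hB, h3⟩⟩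
  · intro a t' hm
    rcases c2 a t' hm with ⟨ha, hb⟩ | ⟨sk, s', h1, h2, h3⟩
    · exact Or.inl ⟨ha, ⟨B, hB, hb⟩⟩
    · refine Or.inr ⟨sk, s', h1.mono (fun v hv => ?_), h2, ⟨B, hB, h3⟩⟩
      exact ⟨B, hB, hv⟩

/-- Matching of a challenge `s →a s'` against `t` when `s ~ t`. -/
theorem bbisim_match {s t : S} (hst : BBisim tr τ s t) {a : Act} {s' : S}
    (hm : tr s a s') :
    (a = τ ∧ BBisim tr τ s' t) ∨
      ∃ tk t', TauSeq tr τ (BBisim tr τ) s t tk ∧ tr tk a t' ∧ BBisim tr τ s' t' :=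
  (bbisim_isBB s t hst).1 a s' hm

section Trans

/-- Auxiliary for transitivity: push a `TauSeq` through a bisimilar state. -/
theorem bbisim_push {s r rk t : S}
    (hseq : TauSeq tr τ (BBisim tr τ) s r rk) (hsr : BBisim tr τ s r)
    (hrt : BBisim tr τ r t) :
    ∃ tm, TauSeq tr τ (fun u v => ∃ w, BBisim tr τ u w ∧ BBisim tr τ w v) s t tm ∧
      BBisim tr τ rk tm := by
  induction hseq generalizing t with
  | refl r => exact ⟨t, .refl t, hrt⟩
  | @step r r1 rk h1 h2 _ ih =>
    rcases bbisim_match hrt h1 with ⟨_, hb⟩ | ⟨tk, t2, hseq2, hmv2, hb2⟩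
    · exact ih h2 hb
    · obtain ⟨tm, hseqm, hrkm⟩ := ih h2 hb2
      refine ⟨tm, ?_, hrkm⟩
      refine TauSeq.concat ?_ hseqm
      have base : TauSeq tr τ (fun u v => ∃ w, BBisim tr τ u w ∧ BBisim tr τ w v) s t tk :=
        hseq2.mono' (fun v hv => ⟨r, hsr, hv⟩)
      exact base.snoc hmv2 ⟨r1, h2, hb2⟩

theorem bbisim_trans {s r t : S} (h1 : BBisim tr τ s r) (h2 : BBisim tr τ r t) :
    BBisim tr τ s t := by
  refine ⟨fun u v => ∃ w, BBisim tr τ u w ∧ BBisim tr τ w v, ?_, r, h1, h2⟩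
  refine isBB_of_symm (fun u v ⟨w, hw1, hw2⟩ => ⟨w, hw2.symm, hw1.symm⟩) ?_
  rintro s t ⟨r, hsr, hrt⟩ a s' hm
  rcases bbisim_match hsr hm with ⟨ha, hb⟩ | ⟨rk, r', hseq, hmv, hb⟩
  · exact Or.inl ⟨ha, r, hb, hrt⟩
  · -- push hseq through hrt
    obtain ⟨tm, hseqm, hrkm⟩ := bbisim_push hseq hsr hrt
    have hrks : BBisim tr τ s rk := hseq.endRel hsr
    rcases bbisim_match hrkm hmv with ⟨ha, hb'⟩ | ⟨tk3, t3, hseq3, hmv3, hb3⟩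
    · -- a = τ and r' ~ tm; respond using last step of hseqm if any
      rcases hseqm.lastStep with rfl | ⟨tp, hseqp, hmvp, hrelp⟩
      · exact Or.inl ⟨ha, r', hb, hb'⟩
      · subst ha
        exact Or.inr ⟨tp, tm, hseqp, hmvp, r', hb, hb'⟩
    · refine Or.inr ⟨tk3, t3, ?_, hmv3, r', hb, hb3⟩
      exact hseqm.concat (hseq3.mono' (fun v hv => ⟨rk, hrks, hv⟩))

end Trans

end Generic


section Silent

variable {S Act : Type} {tr : S → Act → S → Prop} {τ : Act}

theorem Steps.append {s t u : S} {w w' : List Act}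
    (h : Steps tr s w t) (h' : Steps tr t w' u) : Steps tr s (w ++ w') u := by
  induction h with
  | refl s => exact h'
  | step h1 _ ih => exact .step h1 (ih h')

theorem SilentState.steps {s u : S} {w : List Act}
    (hs : SilentState tr τ s) (h : Steps tr s w u) : SilentState tr τ u := by
  intro w' u' h' a ha
  exact hs (w ++ w') u' (h.append h') a (by simp [ha])

theorem TauSeq.toSteps {B : S → S → Prop} {s t u : S}
    (h : TauSeq tr τ B s t u) : ∃ w : List Act, Steps tr t w u ∧ ∀ a ∈ w, a = τ := by
  induction h with
  | refl t => exact ⟨[], .refl t, by simp⟩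
  | step h1 _ _ ih =>
    obtain ⟨w, hw, hwa⟩ := ih
    exact ⟨τ :: w, .step h1 hw, by simpa using hwa⟩

/-- Any two silent states are branching bisimilar. -/
theorem bbisim_of_silent {s t : S} (hs : SilentState tr τ s) (ht : SilentState tr τ t) :
    BBisim tr τ s t := by
  refine ⟨fun u v => SilentState tr τ u ∧ SilentState tr τ v, ?_, hs, ht⟩
  refine isBB_of_symm (fun u v ⟨h1, h2⟩ => ⟨h2, h1⟩) ?_
  rintro s t ⟨hs, ht⟩ a s' hm
  have ha : a = τ := hs [a] s' (.step hm (.refl s')) a (by simp)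
  exact Or.inl ⟨ha, hs.steps (.step hm (.refl s')), ht⟩

/-- A state bisimilar to a silent state is silent. -/
theorem silent_of_bbisim {s t : S} (hst : BBisim tr τ s t) (ht : SilentState tr τ t) :
    SilentState tr τ s := by
  intro w s' hsteps
  induction hsteps generalizing t with
  | refl s => simp
  | @step s a s1 w' sfin hm _ ih =>
    intro b hb
    rcases bbisim_match hst hm with ⟨ha, hb'⟩ | ⟨tk, t', hseq, hmv, hb'⟩
    · rcases List.mem_cons.mp hb with rfl | hb
      · exact ha
      · exact ih hb' ht b hb
    · obtain ⟨w0, hw0, _⟩ := hseq.toSteps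
      have hsteps2 : Steps tr t (w0 ++ [a]) t' := hw0.append (.step hmv (.refl t'))
      have ha : a = τ := ht _ _ hsteps2 a (by simp)
      have ht' : SilentState tr τ t' := ht.steps hsteps2
      rcases List.mem_cons.mp hb with rfl | hb
      · exact ha
      · exact ih hb' ht' b hb

end Silent


section BPABasics

variable {V Act : Type} {G : BPA V Act} {τ : Act}

theorem BPA.tr_lift {σ σ' ρ : List V} {a : Act} (h : G.tr σ a σ') :
    G.tr (σ ++ ρ) a (σ' ++ ρ) := by
  obtain ⟨A, g, b, hrule, rfl, rfl⟩ := h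
  exact ⟨A, g, b ++ ρ, hrule, rfl, by simp⟩

theorem BPA.tr_nil {a : Act} {u : List V} : ¬ G.tr [] a u := by
  rintro ⟨A, g, b, _, h, _⟩; cases h

theorem BPA.tr_decompose {σ ρ u : List V} {a : Act} (h : G.tr (σ ++ ρ) a u) :
    σ = [] ∨ ∃ σ', u = σ' ++ ρ ∧ G.tr σ a σ' := by
  obtain ⟨A, g, b, hrule, heq, rfl⟩ := h
  cases σ with
  | nil => exact Or.inl rfl
  | cons X σ₀ =>
    simp only [List.cons_append, List.cons.injEq] at heq
    obtain ⟨rfl, rfl⟩ := heq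
    exact Or.inr ⟨g ++ σ₀, by simp, ⟨X, g, σ₀, hrule, rfl, rfl⟩⟩

theorem Steps.lift {σ σ' ρ : List V} {w : List Act} (h : Steps G.tr σ w σ') :
    Steps G.tr (σ ++ ρ) w (σ' ++ ρ) := by
  induction h with
  | refl s => exact .refl _
  | step h1 _ ih => exact .step (BPA.tr_lift h1) ih

theorem reach_nil (hG : G.Normed) : ∀ σ : List V, ∃ w, Steps G.tr σ w [] := by
  intro σ
  induction σ with
  | nil => exact ⟨[], .refl _⟩
  | cons A σ₀ ih =>
    obtain ⟨w₀, hw₀⟩ := ih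
    have hA := hG A
    rw [BPA.norm] at hA
    have hne : {n : ℕ∞ | ∃ w : List Act, n = (w.length : ℕ∞) ∧ Steps G.tr [A] w []}.Nonempty := by
      by_contra hcon
      rw [Set.not_nonempty_iff_eq_empty] at hcon
      rw [hcon, sInf_empty] at hA
      exact hA rfl
    obtain ⟨n, w₁, _, hw₁⟩ := hne
    have : Steps G.tr (A :: σ₀) w₁ σ₀ := by
      have := Steps.lift (ρ := σ₀) hw₁
      simpa using this
    exact ⟨w₁ ++ w₀, this.append hw₀⟩

theorem silent_nil : SilentState G.tr τ ([] : List V) := by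
  intro w s' h a ha
  cases h with
  | refl => cases ha
  | step h1 _ => exact absurd h1 BPA.tr_nil

/-- Silentness of a suffix. -/
theorem silent_suffix (hG : G.Normed) {σ ρ : List V}
    (h : SilentState G.tr τ (σ ++ ρ)) : SilentState G.tr τ ρ := by
  obtain ⟨w, hw⟩ := reach_nil hG σ
  have : Steps G.tr (σ ++ ρ) w ρ := by simpa using Steps.lift (ρ := ρ) hw
  exact h.steps this

end BPABasics

section GoodPath

variable {V Act : Type}

/-- A path in which every class-preserving transition is silent. -/
inductive GoodPath (G : BPA V Act) (τ : Act) : List V → ℕ → List V → Prop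
  | refl (s : List V) : GoodPath G τ s 0 s
  | cp {s s' : List V} {c : ℕ} {u : List V} :
      G.tr s τ s' → BBisim G.tr τ s s' → GoodPath G τ s' c u → GoodPath G τ s c u
  | cc {s : List V} {a : Act} {s' : List V} {c : ℕ} {u : List V} :
      G.tr s a s' → ¬ BBisim G.tr τ s s' → GoodPath G τ s' c u → GoodPath G τ s (c + 1) u

variable {G : BPA V Act} {τ : Act}

theorem TauSeq.toGoodPath {s t tk : List V} {c : ℕ} {u : List V}
    (h : TauSeq G.tr τ (BBisim G.tr τ) s t tk) (hst : BBisim G.tr τ s t)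
    (hg : GoodPath G τ tk c u) : GoodPath G τ t c u := by
  induction h with
  | refl t => exact hg
  | @step t t1 _ h1 h2 _ ih =>
    exact .cp h1 (bbisim_trans hst.symm h2) (ih h2 hg)

/-- Transfer of good paths along bisimilarity. -/
theorem goodPath_transfer {s : List V} {c : ℕ} {u : List V}
    (h : GoodPath G τ s c u) (hsil : SilentState G.tr τ u) :
    ∀ {t}, BBisim G.tr τ s t →
      ∃ c' u', c' ≤ c ∧ GoodPath G τ t c' u' ∧ SilentState G.tr τ u' := by
  induction h with
  | refl s =>
    intro t hst
    exact ⟨0, t, le_refl _, .refl t, silent_of_bbisim hst.symm hsil⟩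
  | @cp s s1 c u h1 h2 _ ih =>
    intro t hst
    exact ih hsil (bbisim_trans h2.symm hst)
  | @cc s a s1 c u h1 h2 _ ih =>
    intro t hst
    rcases bbisim_match hst h1 with ⟨ha, hb⟩ | ⟨tk, t', hseq, hmv, hb⟩
    · exact absurd (bbisim_trans hst hb.symm) h2
    · obtain ⟨c', u', hle, hg, hsil'⟩ := ih hsil hb
      have htk : BBisim G.tr τ s tk := hseq.endRel hst
      have hcc : ¬ BBisim G.tr τ tk t' := fun hx =>
        h2 (bbisim_trans htk (bbisim_trans hx hb.symm))
      refine ⟨c' + 1, u', Nat.add_le_add_right hle 1, ?_, hsil'⟩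
      exact hseq.toGoodPath hst (.cc hmv hcc hg)

/-- Every state has a good path to a silent state. -/
theorem goodPath_exists (hG : G.Normed) (σ : List V) :
    ∃ c u, GoodPath G τ σ c u ∧ SilentState G.tr τ u := by
  obtain ⟨w, hw⟩ := reach_nil hG σ
  have aux : ∀ {s w t}, Steps G.tr s w t → SilentState G.tr τ t →
      ∃ c u, GoodPath G τ s c u ∧ SilentState G.tr τ u := by
    intro s w t hsteps
    induction hsteps with
    | refl s => exact fun hs => ⟨0, s, .refl _, hs⟩
    | @step s a s1 w' t h1 h2 ih =>
      intro hst
      obtain ⟨c1, u1, hg1, hs1⟩ := ih hst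
      by_cases hb : BBisim G.tr τ s s1
      · obtain ⟨c', u', _, hg', hs'⟩ := goodPath_transfer hg1 hs1 hb.symm
        exact ⟨c', u', hg', hs'⟩
      · exact ⟨c1 + 1, u1, .cc h1 hb hg1, hs1⟩
  exact aux hw silent_nil

/-- The minimal number of class changes on a good path to a silent state. -/
noncomputable def mgood (G : BPA V Act) (τ : Act) (s : List V) : ℕ :=
  sInf {c : ℕ | ∃ u, GoodPath G τ s c u ∧ SilentState G.tr τ u}

theorem mgood_le {s : List V} {c : ℕ} {u : List V}
    (h : GoodPath G τ s c u) (hsil : SilentState G.tr τ u) : mgood G τ s ≤ c :=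
  Nat.sInf_le ⟨u, h, hsil⟩

theorem mgood_spec (hG : G.Normed) (s : List V) :
    ∃ u, GoodPath G τ s (mgood G τ s) u ∧ SilentState G.tr τ u := by
  have hne : {c : ℕ | ∃ u, GoodPath G τ s c u ∧ SilentState G.tr τ u}.Nonempty := by
    obtain ⟨c, u, hg, hs⟩ := goodPath_exists (τ := τ) hG s
    exact ⟨c, u, hg, hs⟩
  exact Nat.sInf_mem hne

end GoodPath


section Drain

variable {V Act : Type}

/-- A silent class-preserving path down to `γ`. -/
inductive DrainPath (G : BPA V Act) (τ : Act) (γ : List V) : List V → Prop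
  | base : DrainPath G τ γ γ
  | step {v v' : List V} : G.tr v τ v' → BBisim G.tr τ v v' → DrainPath G τ γ v' →
      DrainPath G τ γ v

variable {G : BPA V Act} {τ : Act} {γ : List V}

theorem DrainPath.bbisim {v : List V} (h : DrainPath G τ γ v) : BBisim G.tr τ v γ := by
  induction h with
  | base => exact bbisim_refl γ
  | step h1 h2 _ ih => exact bbisim_trans h2 ih

/-- From a silent state above `γ` there is a drain path. -/
theorem drain_of_silent (hG : G.Normed) {σ : List V}
    (h : SilentState G.tr τ (σ ++ γ)) : DrainPath G τ γ (σ ++ γ) := by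
  obtain ⟨w, hw⟩ := reach_nil hG σ
  have hw' : Steps G.tr (σ ++ γ) w γ := by simpa using Steps.lift (ρ := γ) hw
  have aux : ∀ {x w t}, Steps G.tr x w t → t = γ → SilentState G.tr τ x →
      DrainPath G τ γ x := by
    intro x w t hsteps
    induction hsteps with
    | refl s => rintro rfl _; exact .base
    | @step s a s1 w' t h1 h2 ih =>
      rintro rfl hs
      have ha : a = _root_.id τ := hs _ _ (.step h1 h2) a (by simp)
      subst ha
      have hs1 := hs.steps (.step h1 (.refl s1))
      exact .step h1 (bbisim_of_silent hs hs1) (ih rfl hs1)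
  exact aux hw' rfl h

theorem silent_steps_all {s t : List V} {w : List Act}
    (hs : SilentState G.tr τ s) (h : Steps G.tr s w t) : ∀ a ∈ w, a = τ :=
  hs w t h

/-- Lower bound: a good path from above `γ` to a silent state uses at least
`mgood γ` class changes. -/
theorem mgood_le_of_above (hG : G.Normed) {v : List V} {c : ℕ} {u : List V}
    (h : GoodPath G τ v c u) (hsil : SilentState G.tr τ u) :
    ∀ σ : List V, v = σ ++ γ → mgood G τ γ ≤ c := by
  induction h with
  | refl s =>
    rintro σ rfl
    have hγ : SilentState G.tr τ γ := silent_suffix hG hsil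
    exact mgood_le (.refl γ) hγ
  | @cp s s1 c u h1 h2 h3 ih =>
    rintro σ rfl
    cases σ with
    | nil => exact mgood_le (.cp (by simpa using h1) (by simpa using h2) h3) hsil
    | cons X σ₀ =>
      rcases BPA.tr_decompose (σ := X :: σ₀) h1 with hσ | ⟨σ', rfl, _⟩
      · cases hσ
      · exact ih hsil σ' rfl
  | @cc s a s1 c u h1 h2 h3 ih =>
    rintro σ rfl
    cases σ with
    | nil =>
      exact le_trans (mgood_le (.cc (by simpa using h1) (by simpa using h2) h3) hsil)
        (le_refl _)
    | cons X σ₀ =>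
      rcases BPA.tr_decompose (σ := X :: σ₀) h1 with hσ | ⟨σ', rfl, _⟩
      · cases hσ
      · exact le_trans (ih hsil σ' rfl) (Nat.le_succ c)

/-- Key segment lemma: an optimal good path from `σ ++ γ` to a silent state
begins with a class-preserving silent drain to `γ` (or stays silent). -/
theorem drain_of_goodPath (hG : G.Normed) {v : List V} {c : ℕ} {u : List V}
    (h : GoodPath G τ v c u) (hsil : SilentState G.tr τ u) :
    ∀ σ : List V, v = σ ++ γ → c ≤ mgood G τ γ → DrainPath G τ γ (σ ++ γ) := by
  induction h with
  | refl s =>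
    rintro σ rfl _
    exact drain_of_silent hG hsil
  | @cp s s1 c u h1 h2 h3 ih =>
    rintro σ rfl hc
    cases σ with
    | nil => exact .base
    | cons X σ₀ =>
      rcases BPA.tr_decompose (σ := X :: σ₀) h1 with hσ | ⟨σ', rfl, _⟩
      · cases hσ
      · exact .step h1 h2 (ih hsil σ' rfl hc)
  | @cc s a s1 c u h1 h2 h3 ih =>
    rintro σ rfl hc
    cases σ with
    | nil => exact .base
    | cons X σ₀ =>
      rcases BPA.tr_decompose (σ := X :: σ₀) h1 with hσ | ⟨σ', rfl, _⟩
      · cases hσ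
      · exfalso
        have := mgood_le_of_above (γ := γ) hG h3 hsil σ' rfl
        omega

/-- The drain lemma: if `αγ ~ γ` then `αγ` silently, class-preservingly drains to `γ`. -/
theorem drain_of_redundant (hG : G.Normed) {α : List V}
    (h : BBisim G.tr τ (α ++ γ) γ) : DrainPath G τ γ (α ++ γ) := by
  obtain ⟨u, hg, hsil⟩ := mgood_spec (τ := τ) hG γ
  obtain ⟨c', u', hle, hg', hsil'⟩ := goodPath_transfer hg hsil h.symm
  exact drain_of_goodPath hG hg' hsil' α rfl hle

theorem DrainPath.pass {v : List V} (h : DrainPath G τ γ v) :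
    ∀ ρ σ : List V, v = ρ ++ σ → γ.length < σ.length → DrainPath G τ γ σ := by
  induction h with
  | base =>
    rintro ρ σ heq hlen
    exfalso
    have : γ.length = ρ.length + σ.length := by rw [heq]; simp
    omega
  | @step v v' h1 h2 h3 ih =>
    rintro ρ σ rfl hlen
    cases ρ with
    | nil => exact .step (by simpa using h1) (by simpa using h2) h3
    | cons X ρ₀ =>
      rcases BPA.tr_decompose (σ := X :: ρ₀) h1 with hρ | ⟨ρ', rfl, _⟩
      · cases hρ
      · exact ih ρ' σ rfl hlen

/-- Tail lemma: `X ζ γ ~ γ` implies `ζ γ ~ γ`. -/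
theorem tail_redundant (hG : G.Normed) {X : V} {ζ : List V}
    (h : BBisim G.tr τ ((X :: ζ) ++ γ) γ) : BBisim G.tr τ (ζ ++ γ) γ := by
  cases ζ with
  | nil => simpa using bbisim_refl γ
  | cons Y ζ₀ =>
    have hd := drain_of_redundant hG h
    have : DrainPath G τ γ ((Y :: ζ₀) ++ γ) := by
      refine hd.pass [X] ((Y :: ζ₀) ++ γ) (by simp) (by simp)
    exact this.bbisim

end Drain


section Cong

variable {V Act : Type} {G : BPA V Act} {τ : Act}

/-- Left congruence: `σ ~ σ'` implies `ζσ ~ ζσ'`. -/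
theorem bbisim_leftcong {σ σ' : List V} (h : BBisim G.tr τ σ σ') (ζ : List V) :
    BBisim G.tr τ (ζ ++ σ) (ζ ++ σ') := by
  refine ⟨fun x y => ∃ ζ σ σ', x = ζ ++ σ ∧ y = ζ ++ σ' ∧ BBisim G.tr τ σ σ', ?_,
    ζ, σ, σ', rfl, rfl, h⟩
  refine isBB_of_symm ?_ ?_
  · rintro x y ⟨ζ, σ, σ', rfl, rfl, hb⟩; exact ⟨ζ, σ', σ, rfl, rfl, hb.symm⟩
  · rintro x y ⟨ζ, σ, σ', rfl, rfl, hb⟩ a x' hm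
    cases ζ with
    | nil =>
      simp only [List.nil_append] at *
      rcases bbisim_match hb hm with ⟨ha, hb'⟩ | ⟨tk, t', hseq, hmv, hb'⟩
      · exact Or.inl ⟨ha, [], x', σ', rfl, rfl, hb'⟩
      · refine Or.inr ⟨tk, t', hseq.mono (fun v hv => ⟨[], σ, v, rfl, rfl, hv⟩) , hmv,
          [], x', t', rfl, rfl, hb'⟩
    | cons A ζ₀ =>
      rcases BPA.tr_decompose (σ := A :: ζ₀) (ρ := σ) hm with hζ | ⟨ρ, rfl, hmv⟩
      · cases hζ
      · refine Or.inr ⟨(A :: ζ₀) ++ σ', ρ ++ σ', .refl _, BPA.tr_lift hmv, ?_⟩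
        exact ⟨ρ, σ, σ', rfl, rfl, hb⟩

/-- Redundancy sets only depend on the `~`-class. -/
theorem red_transfer {σ σ' : List V} (h : BBisim G.tr τ σ σ') {X : V}
    (hX : BBisim G.tr τ (X :: σ) σ) : BBisim G.tr τ (X :: σ') σ' := by
  have h1 : BBisim G.tr τ (X :: σ') (X :: σ) := by
    simpa using bbisim_leftcong h.symm [X]
  exact bbisim_trans h1 (bbisim_trans hX h)

/-- CORE: if every γ-redundant variable is δ-redundant, then every
fully γ-redundant word is fully δ-redundant. -/
theorem core_transfer (hG : G.Normed) {γ δ : List V}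
    (hX : ∀ X : V, BBisim G.tr τ (X :: γ) γ → BBisim G.tr τ (X :: δ) δ) :
    ∀ ζ : List V, BBisim G.tr τ (ζ ++ γ) γ → BBisim G.tr τ (ζ ++ δ) δ := by
  intro ζ
  induction ζ with
  | nil => intro _; simpa using bbisim_refl δ
  | cons X ζ₀ ih =>
    intro h
    have htail : BBisim G.tr τ (ζ₀ ++ γ) γ := tail_redundant hG h
    -- X is redundant over ζ₀ ++ γ, hence over γ
    have hXz : BBisim G.tr τ (X :: (ζ₀ ++ γ)) (ζ₀ ++ γ) := by
      refine bbisim_trans ?_ htail.symm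
      simpa using h
    have hXγ : BBisim G.tr τ (X :: γ) γ := red_transfer htail hXz
    have hXδ : BBisim G.tr τ (X :: δ) δ := hX X hXγ
    have hihδ : BBisim G.tr τ (ζ₀ ++ δ) δ := ih htail
    have h1 : BBisim G.tr τ (X :: (ζ₀ ++ δ)) (X :: δ) := by
      simpa using bbisim_leftcong hihδ [X]
    simpa using bbisim_trans h1 hXδ

end Cong


section Main

variable {V Act : Type}

/-- The master relation witnessing transfer from context `γ` to context `δ`. -/
def BBrel (G : BPA V Act) (τ : Act) (γ δ : List V) (x y : List V) : Prop :=
  BBisim G.tr τ x y ∨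
    ∃ α β : List V, x = α ++ δ ∧ y = β ++ δ ∧
      BBisim G.tr τ (α ++ γ) (β ++ γ) ∧
      ¬ BBisim G.tr τ (α ++ γ) γ ∧ ¬ BBisim G.tr τ (β ++ γ) γ

variable {G : BPA V Act} {τ : Act} {γ δ : List V}

theorem translate_tauseq {α : List V} (hnr : ¬ BBisim G.tr τ (α ++ γ) γ) :
    ∀ {t u}, TauSeq G.tr τ (BBisim G.tr τ) (α ++ γ) t u →
    ∀ β₁, t = β₁ ++ γ → BBisim G.tr τ (α ++ γ) (β₁ ++ γ) →
    ∃ β₂, u = β₂ ++ γ ∧ BBisim G.tr τ (α ++ γ) (β₂ ++ γ) ∧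
      TauSeq G.tr τ (BBrel G τ γ δ) (α ++ δ) (β₁ ++ δ) (β₂ ++ δ) := by
  intro t u hseq
  induction hseq with
  | refl t =>
    rintro β₁ rfl hb
    exact ⟨β₁, rfl, hb, .refl _⟩
  | @step t t1 u h1 h2 _ ih =>
    rintro β₁ rfl hb
    cases β₁ with
    | nil => exact absurd (by simpa using hb) hnr
    | cons B β₀ =>
      rcases BPA.tr_decompose (σ := B :: β₀) h1 with hc | ⟨β₁', rfl, hmv⟩
      · cases hc
      · obtain ⟨β₂, rfl, hb2, hseqδ⟩ := ih β₁' rfl h2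
        refine ⟨β₂, rfl, hb2, .step (BPA.tr_lift hmv) ?_ hseqδ⟩
        refine Or.inr ⟨α, β₁', rfl, rfl, h2, hnr, fun hx => hnr (bbisim_trans h2 hx)⟩

theorem bbrel_isbb (hG : G.Normed)
    (hX : ∀ X : V, BBisim G.tr τ (X :: γ) γ → BBisim G.tr τ (X :: δ) δ) :
    IsBranchingBisim G.tr τ (BBrel G τ γ δ) := by
  refine isBB_of_symm ?_ ?_
  · rintro x y (hb | ⟨α, β, rfl, rfl, hb, h1, h2⟩)
    · exact Or.inl hb.symm
    · exact Or.inr ⟨β, α, rfl, rfl, hb.symm, h2, h1⟩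
  · rintro x y (hb | ⟨α, β, rfl, rfl, hb, hnrα, hnrβ⟩) a x' hm
    · rcases bbisim_match hb hm with ⟨ha, hb'⟩ | ⟨tk, t', hseq, hmv, hb'⟩
      · exact Or.inl ⟨ha, Or.inl hb'⟩
      · exact Or.inr ⟨tk, t', hseq.mono (fun v hv => Or.inl hv), hmv, Or.inl hb'⟩
    · cases α with
      | nil => exact absurd (by simpa using bbisim_refl γ) hnrα
      | cons A α₀ =>
        rcases BPA.tr_decompose (σ := A :: α₀) hm with hc | ⟨α', rfl, hmv⟩
        · cases hc
        · have hmγ : G.tr ((A :: α₀) ++ γ) a (α' ++ γ) := BPA.tr_lift hmv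
          rcases bbisim_match hb hmγ with ⟨ha, hb'⟩ | ⟨tk, t', hseq, hmv2, hb'⟩
          · have hnrα' : ¬ BBisim G.tr τ (α' ++ γ) γ :=
              fun hx => hnrβ (bbisim_trans hb'.symm hx)
            exact Or.inl ⟨ha, Or.inr ⟨α', β, rfl, rfl, hb', hnrα', hnrβ⟩⟩
          · obtain ⟨β₂, rfl, hb2, hseqδ⟩ := translate_tauseq (δ := δ) hnrα hseq β rfl hb
            cases β₂ with
            | nil => exact absurd (by simpa using hb2) hnrα
            | cons C β₂₀ =>
              rcases BPA.tr_decompose (σ := C :: β₂₀) hmv2 with hc | ⟨β₃, rfl, hmv3⟩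
              · cases hc
              · refine Or.inr ⟨(C :: β₂₀) ++ δ, β₃ ++ δ, hseqδ, BPA.tr_lift hmv3, ?_⟩
                by_cases hra' : BBisim G.tr τ (α' ++ γ) γ
                · have hrb3 : BBisim G.tr τ (β₃ ++ γ) γ := bbisim_trans hb'.symm hra'
                  exact Or.inl (bbisim_trans (core_transfer hG hX α' hra')
                    (core_transfer hG hX β₃ hrb3).symm)
                · exact Or.inr ⟨α', β₃, rfl, rfl, hb', hra',
                    fun hx => hra' (bbisim_trans hb' hx)⟩

/-- One direction of the main statement. -/
theorem main_dir (hG : G.Normed)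
    (hX : ∀ X : V, BBisim G.tr τ (X :: γ) γ → BBisim G.tr τ (X :: δ) δ)
    (α β : List V) (hb : BBisim G.tr τ (α ++ γ) (β ++ γ)) :
    BBisim G.tr τ (α ++ δ) (β ++ δ) := by
  by_cases hr : BBisim G.tr τ (α ++ γ) γ
  · have hrβ : BBisim G.tr τ (β ++ γ) γ := bbisim_trans hb.symm hr
    exact bbisim_trans (core_transfer hG hX α hr) (core_transfer hG hX β hrβ).symm
  · have hrβ : ¬ BBisim G.tr τ (β ++ γ) γ := fun hx => hr (bbisim_trans hb hx)
    exact ⟨BBrel G τ γ δ, bbrel_isbb hG hX, Or.inr ⟨α, β, rfl, rfl, hb, hr, hrβ⟩⟩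

end Main


/-- if `R_γ = R_δ`, then `αγ ~ βγ ↔ αδ ~ βδ` for all `α, β`;
in particular `R_{Aγ} = R_{Aδ}` for every `A`. -/
theorem redset_determines_equivalence {V Act : Type} (G : BPA V Act) (τ : Act)
    (hG : G.Normed) (γ δ : List V) (h : RedSet G τ γ = RedSet G τ δ) :
    (∀ α β : List V,
      BBisim G.tr τ (α ++ γ) (β ++ γ) ↔ BBisim G.tr τ (α ++ δ) (β ++ δ)) ∧
    (∀ A : V, RedSet G τ (A :: γ) = RedSet G τ (A :: δ)) := by
  have hX1 : ∀ X : V, BBisim G.tr τ (X :: γ) γ → BBisim G.tr τ (X :: δ) δ := by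
    intro X hx
    have := Set.ext_iff.mp h X
    simpa [RedSet] using this.mp (by simpa [RedSet] using hx)
  have hX2 : ∀ X : V, BBisim G.tr τ (X :: δ) δ → BBisim G.tr τ (X :: γ) γ := by
    intro X hx
    have := Set.ext_iff.mp h X
    simpa [RedSet] using this.mpr (by simpa [RedSet] using hx)
  have hmain : ∀ α β : List V,
      BBisim G.tr τ (α ++ γ) (β ++ γ) ↔ BBisim G.tr τ (α ++ δ) (β ++ δ) :=
    fun α β => ⟨main_dir hG hX1 α β, main_dir hG hX2 α β⟩
  refine ⟨hmain, ?_⟩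
  intro A
  ext X
  simp only [RedSet, Set.mem_setOf_eq]
  constructor
  · intro hx
    have := (hmain [X, A] [A]).mp (by simpa using hx)
    simpa using this
  · intro hx
    have := (hmain [X, A] [A]).mpr (by simpa using hx)
    simpa using this
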